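/- Let 0 < s < 1, max(2s-1,0) < α < min(1,2s), φ ∈ C¹_c(ℝ^N), w_α(x) = (x_N)₊^α, and a ∈ L^∞(𝕊^{N-1}) nonnegative. Define the bilinear form l[w_α,φ](x) = ∫_{ℝ^N} { [w_α(x+y)-w_α(x)][φ(x+y)-φ(x)] + [w_α(x-y)-w_α(x)][φ(x-y)-φ(x)] } |y|^{-(N+2s)} a(y/|y|) dy. Then x ↦ l[w_α,φ](x) is continuous on the closed upper half-space: for any sequence x_n ∈ ℝ^N_+ with x_n → x₀ ∈ closure(ℝ^N_+), l[w_α,φ](x_n) → l[w_α,φ](x₀). -/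

import Mathlib

open MeasureTheory Filter Metric Set
open scoped ENNReal

lemma aux_rpow_add_le {a b p : ℝ} (ha : 0 ≤ a) (hb : 0 ≤ b) (hp0 : 0 ≤ p) (hp1 : p ≤ 1) :
    (a + b) ^ p ≤ a ^ p + b ^ p := by
  have key := NNReal.rpow_add_le_add_rpow a.toNNReal b.toNNReal hp0 hp1
  have h := NNReal.coe_le_coe.2 key
  push_cast [Real.coe_toNNReal a ha, Real.coe_toNNReal b hb] at h
  exact h

lemma aux_abs_rpow_sub {α : ℝ} (h0 : 0 ≤ α) (h1 : α ≤ 1) :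
    ∀ {a b : ℝ}, 0 ≤ a → 0 ≤ b → |a ^ α - b ^ α| ≤ |a - b| ^ α := by
  have key : ∀ {a b : ℝ}, 0 ≤ a → 0 ≤ b → b ≤ a → |a ^ α - b ^ α| ≤ |a - b| ^ α := by
    intro a b ha hb hab
    rw [abs_of_nonneg (sub_nonneg.2 (Real.rpow_le_rpow hb hab h0)),
      abs_of_nonneg (sub_nonneg.2 hab)]
    have h2 : a ^ α ≤ b ^ α + (a - b) ^ α := by
      have h3 : (b + (a - b)) ^ α ≤ b ^ α + (a - b) ^ α :=
        aux_rpow_add_le hb (by linarith) h0 h1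
      simpa using h3
    linarith
  intro a b ha hb
  rcases le_total b a with hab | hab
  · exact key ha hb hab
  · rw [abs_sub_comm, abs_sub_comm a b]; exact key hb ha hab

lemma aux_coord_le_norm (n : ℕ) (y : EuclideanSpace ℝ (Fin (n + 1))) (i : Fin (n + 1)) :
    |y i| ≤ ‖y‖ := by
  rw [EuclideanSpace.norm_eq]
  calc |y i| = Real.sqrt (‖y i‖ ^ 2) := by
        rw [Real.norm_eq_abs, Real.sqrt_sq_eq_abs, abs_abs]
  _ ≤ Real.sqrt (∑ j, ‖y j‖ ^ 2) :=
      Real.sqrt_le_sqrt (Finset.single_le_sum (f := fun j => ‖y j‖ ^ 2)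
        (fun j _ => sq_nonneg _) (Finset.mem_univ i))

lemma aux_integrableOn_ball (n : ℕ) {β : ℝ} (hβn : -(n + 1 : ℝ) < β) (hβ0 : β < 0) :
    IntegrableOn (fun y : EuclideanSpace ℝ (Fin (n + 1)) => ‖y‖ ^ β) (ball 0 1) := by
  set E := EuclideanSpace ℝ (Fin (n + 1))
  have hmeas : Measurable fun y : E => ‖y‖ ^ β := by fun_prop
  refine ⟨hmeas.aestronglyMeasurable, ?_⟩
  rw [hasFiniteIntegral_iff_norm]
  have hnorm : ∀ y : E, ENNReal.ofReal ‖‖y‖ ^ β‖ = ENNReal.ofReal (‖y‖ ^ β) := fun y => by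
    rw [Real.norm_eq_abs, abs_of_nonneg (Real.rpow_nonneg (norm_nonneg y) β)]
  simp_rw [hnorm]
  rw [lintegral_eq_lintegral_meas_le _
    (Eventually.of_forall fun y => Real.rpow_nonneg (norm_nonneg y) β) hmeas.aemeasurable]
  set μ := volume.restrict (ball (0 : E) 1)
  calc ∫⁻ t in Ioi (0:ℝ), μ {a | t ≤ ‖a‖ ^ β}
      ≤ ∫⁻ t in Ioc (0:ℝ) 1 ∪ Ioi 1, μ {a | t ≤ ‖a‖ ^ β} :=
        lintegral_mono_set Ioi_subset_Ioc_union_Ioi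
    _ ≤ (∫⁻ t in Ioc (0:ℝ) 1, μ {a | t ≤ ‖a‖ ^ β}) + ∫⁻ t in Ioi 1, μ {a | t ≤ ‖a‖ ^ β} :=
        lintegral_union_le _ _ _
    _ < ∞ := ENNReal.add_lt_top.2 ⟨?_, ?_⟩
  · calc (∫⁻ t in Ioc (0:ℝ) 1, μ {a | t ≤ ‖a‖ ^ β})
        ≤ ∫⁻ _ in Ioc (0:ℝ) 1, volume (ball (0 : E) 1) := by
          refine lintegral_mono fun t => ?_
          calc μ {a | t ≤ ‖a‖ ^ β} ≤ μ univ := measure_mono (subset_univ _)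
          _ = volume (ball (0 : E) 1) := by simp [μ]
      _ < ∞ := by
          rw [setLIntegral_const]
          exact ENNReal.mul_lt_top measure_ball_lt_top (by simp)
  · have hsub : ∀ t ∈ Ioi (1:ℝ), μ {a | t ≤ ‖a‖ ^ β}
        ≤ ENNReal.ofReal (t ^ (β⁻¹ * (n + 1))) * volume (ball (0 : E) 1) := by
      intro t ht
      have ht1 : (1:ℝ) < t := ht
      have ht0 : (0:ℝ) < t := by linarith
      have hset : {a : E | t ≤ ‖a‖ ^ β} ⊆ closedBall 0 (t ^ β⁻¹) := by
        intro y hy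
        simp only [mem_setOf_eq] at hy
        rcases eq_or_ne y 0 with rfl | hy0
        · exfalso
          rw [norm_zero, Real.zero_rpow hβ0.ne] at hy
          linarith
        · have hny : 0 < ‖y‖ := norm_pos_iff.2 hy0
          rw [mem_closedBall_zero_iff]
          calc ‖y‖ = ‖y‖ ^ (β * β⁻¹) := by
                rw [mul_inv_cancel₀ hβ0.ne, Real.rpow_one]
          _ = (‖y‖ ^ β) ^ β⁻¹ := Real.rpow_mul hny.le _ _
          _ ≤ t ^ β⁻¹ := Real.rpow_le_rpow_of_nonpos ht0 hy (inv_nonpos.2 hβ0.le)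
      have hmeasset : MeasurableSet {a : E | t ≤ ‖a‖ ^ β} :=
        measurableSet_le measurable_const hmeas
      calc μ {a | t ≤ ‖a‖ ^ β} = volume ({a : E | t ≤ ‖a‖ ^ β} ∩ ball 0 1) :=
            Measure.restrict_apply hmeasset
      _ ≤ volume (closedBall (0 : E) (t ^ β⁻¹)) :=
            measure_mono (inter_subset_left.trans hset)
      _ = ENNReal.ofReal ((t ^ β⁻¹) ^ Module.finrank ℝ E) * volume (ball (0 : E) 1) :=
            Measure.addHaar_closedBall _ _ (Real.rpow_nonneg ht0.le _)
      _ = ENNReal.ofReal (t ^ (β⁻¹ * (n + 1))) * volume (ball (0 : E) 1) := by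
            rw [← Real.rpow_natCast (t ^ β⁻¹), ← Real.rpow_mul ht0.le, finrank_euclideanSpace_fin]
            norm_num
    calc (∫⁻ t in Ioi (1:ℝ), μ {a | t ≤ ‖a‖ ^ β})
        ≤ ∫⁻ t in Ioi (1:ℝ), ENNReal.ofReal (t ^ (β⁻¹ * (n + 1))) * volume (ball (0 : E) 1) :=
          setLIntegral_mono_ae (by fun_prop) (ae_of_all _ hsub)
      _ = (∫⁻ t in Ioi (1:ℝ), ENNReal.ofReal (t ^ (β⁻¹ * (n + 1)))) * volume (ball (0 : E) 1) :=
          lintegral_mul_const' _ _ measure_ball_lt_top.ne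
      _ < ∞ := by
          refine ENNReal.mul_lt_top ?_ measure_ball_lt_top
          have hexp : β⁻¹ * (n + 1) < -1 := by
            have h : ((n:ℝ) + 1) / β < -1 := by
              rw [div_lt_iff_of_neg hβ0]
              linarith
            calc β⁻¹ * ((n:ℝ) + 1) = ((n:ℝ)+1) / β := by rw [div_eq_mul_inv, mul_comm]
            _ < -1 := h
          exact (integrableOn_Ioi_rpow_of_lt hexp one_pos).setLIntegral_lt_top

theorem stmt11 (n : ℕ) (s α : ℝ) (hs0 : 0 < s) (hs1 : s < 1)
    (hα1 : max (2 * s - 1) 0 < α) (hα2 : α < min 1 (2 * s))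
    (a : EuclideanSpace ℝ (Fin (n + 1)) → ℝ) (ha : Measurable a)
    (hanonneg : ∀ θ, 0 ≤ a θ) (D : ℝ) (habd : ∀ θ, a θ ≤ D)
    (φ : EuclideanSpace ℝ (Fin (n + 1)) → ℝ) (hφ : ContDiff ℝ 1 φ)
    (hφc : HasCompactSupport φ)
    (w : EuclideanSpace ℝ (Fin (n + 1)) → ℝ)
    (hw : ∀ x, w x = max (x (Fin.last n)) 0 ^ α)
    (l : EuclideanSpace ℝ (Fin (n + 1)) → ℝ)
    (hl : ∀ x, l x = ∫ y : EuclideanSpace ℝ (Fin (n + 1)),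
      ((w (x + y) - w x) * (φ (x + y) - φ x) + (w (x - y) - w x) * (φ (x - y) - φ x)) *
        ‖y‖ ^ (-((n + 1 : ℝ) + 2 * s)) * a (‖y‖⁻¹ • y))
    (x₀ : EuclideanSpace ℝ (Fin (n + 1))) (hx₀ : 0 ≤ x₀ (Fin.last n))
    (xseq : ℕ → EuclideanSpace ℝ (Fin (n + 1)))
    (hxseq : ∀ k, 0 < xseq k (Fin.last n))
    (hconv : Tendsto xseq atTop (nhds x₀)) :
    Tendsto (fun k => l (xseq k)) atTop (nhds (l x₀)) := by
  -- basic facts about the exponents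
  have hα0 : 0 < α := lt_of_le_of_lt (le_max_right _ _) hα1
  have hα1' : α < 1 := lt_of_lt_of_le hα2 (min_le_left _ _)
  have hα2s : α < 2 * s := lt_of_lt_of_le hα2 (min_le_right _ _)
  have h2s1 : 2 * s - 1 < α := lt_of_le_of_lt (le_max_left _ _) hα1
  -- Lipschitz constant and sup bound for φ
  obtain ⟨L, hL⟩ := hφ.lipschitzWith_of_hasCompactSupport hφc one_ne_zero
  obtain ⟨M, hM⟩ := hφc.exists_bound_of_continuous hφ.continuous
  have hM0 : 0 ≤ M := le_trans (norm_nonneg _) (hM 0)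
  have hD0 : 0 ≤ D := le_trans (hanonneg 0) (habd 0)
  -- `w` is `α`-Hölder
  have hwlip : ∀ u v : EuclideanSpace ℝ (Fin (n + 1)), |w u - w v| ≤ ‖u - v‖ ^ α := by
    intro u v
    rw [hw u, hw v]
    refine (aux_abs_rpow_sub hα0.le hα1'.le (le_max_right _ _) (le_max_right _ _)).trans ?_
    refine Real.rpow_le_rpow (abs_nonneg _) ?_ hα0.le
    calc |max (u (Fin.last n)) 0 - max (v (Fin.last n)) 0|
        ≤ |u (Fin.last n) - v (Fin.last n)| := abs_max_sub_max_le_abs _ _ _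
    _ = |(u - v) (Fin.last n)| := by simp
    _ ≤ ‖u - v‖ := aux_coord_le_norm n _ _
  -- bound on the numerator
  have hnum : ∀ x y : EuclideanSpace ℝ (Fin (n + 1)),
      |(w (x + y) - w x) * (φ (x + y) - φ x) + (w (x - y) - w x) * (φ (x - y) - φ x)|
        ≤ 2 * (‖y‖ ^ α * min ((L : ℝ) * ‖y‖) (2 * M)) := by
    intro x y
    have b1 : |w (x + y) - w x| ≤ ‖y‖ ^ α := by
      have := hwlip (x + y) x; simpa using this
    have b2 : |w (x - y) - w x| ≤ ‖y‖ ^ α := by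
      have := hwlip (x - y) x; simpa using this
    have hphi : ∀ z : EuclideanSpace ℝ (Fin (n + 1)), ‖z - x‖ = ‖y‖ → |φ z - φ x| ≤ min ((L : ℝ) * ‖y‖) (2 * M) := by
      intro z hz
      refine le_min ?_ ?_
      · calc |φ z - φ x| = dist (φ z) (φ x) := (Real.dist_eq _ _).symm
        _ ≤ (L : ℝ) * dist z x := hL.dist_le_mul _ _
        _ = (L : ℝ) * ‖y‖ := by rw [dist_eq_norm, hz]
      · calc |φ z - φ x| ≤ ‖φ z‖ + ‖φ x‖ := by
              rw [← Real.norm_eq_abs]; exact norm_sub_le _ _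
        _ ≤ M + M := add_le_add (hM _) (hM _)
        _ = 2 * M := by ring
    have c1 : |φ (x + y) - φ x| ≤ min ((L : ℝ) * ‖y‖) (2 * M) := hphi _ (by simp)
    have c2 : |φ (x - y) - φ x| ≤ min ((L : ℝ) * ‖y‖) (2 * M) := hphi _ (by simp)
    have hminn : 0 ≤ min ((L : ℝ) * ‖y‖) (2 * M) :=
      le_min (by positivity) (by positivity)
    calc |(w (x + y) - w x) * (φ (x + y) - φ x) + (w (x - y) - w x) * (φ (x - y) - φ x)|
        ≤ |(w (x + y) - w x) * (φ (x + y) - φ x)| + |(w (x - y) - w x) * (φ (x - y) - φ x)| :=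
          abs_add_le _ _
      _ = |w (x + y) - w x| * |φ (x + y) - φ x| + |w (x - y) - w x| * |φ (x - y) - φ x| := by
          rw [abs_mul, abs_mul]
      _ ≤ ‖y‖ ^ α * min ((L : ℝ) * ‖y‖) (2 * M) + ‖y‖ ^ α * min ((L : ℝ) * ‖y‖) (2 * M) :=
          add_le_add (mul_le_mul b1 c1 (abs_nonneg _) (Real.rpow_nonneg (norm_nonneg _) _))
            (mul_le_mul b2 c2 (abs_nonneg _) (Real.rpow_nonneg (norm_nonneg _) _))
      _ = 2 * (‖y‖ ^ α * min ((L : ℝ) * ‖y‖) (2 * M)) := by ring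
  -- the dominating function
  set bound : EuclideanSpace ℝ (Fin (n + 1)) → ℝ := fun y =>
    2 * D * (‖y‖ ^ α * min ((L : ℝ) * ‖y‖) (2 * M) * ‖y‖ ^ (-((n + 1 : ℝ) + 2 * s))) with hbound_def
  have hbound_int : Integrable bound := by
    have hcore_meas : Measurable fun y : EuclideanSpace ℝ (Fin (n + 1)) =>
        ‖y‖ ^ α * min ((L : ℝ) * ‖y‖) (2 * M) * ‖y‖ ^ (-((n + 1 : ℝ) + 2 * s)) := by fun_prop
    have hcore_nonneg : ∀ y : EuclideanSpace ℝ (Fin (n + 1)),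
        0 ≤ ‖y‖ ^ α * min ((L : ℝ) * ‖y‖) (2 * M) * ‖y‖ ^ (-((n + 1 : ℝ) + 2 * s)) := by
      intro y
      have : 0 ≤ min ((L : ℝ) * ‖y‖) (2 * M) := le_min (by positivity) (by positivity)
      positivity
    have hcore : Integrable fun y : EuclideanSpace ℝ (Fin (n + 1)) =>
        ‖y‖ ^ α * min ((L : ℝ) * ‖y‖) (2 * M) * ‖y‖ ^ (-((n + 1 : ℝ) + 2 * s)) := by
      have h1 : IntegrableOn (fun y : EuclideanSpace ℝ (Fin (n + 1)) =>
          ‖y‖ ^ α * min ((L : ℝ) * ‖y‖) (2 * M) * ‖y‖ ^ (-((n + 1 : ℝ) + 2 * s))) (ball 0 1) := by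
        have hint : IntegrableOn (fun y : EuclideanSpace ℝ (Fin (n + 1)) => (L : ℝ) * ‖y‖ ^ (α + 1 - ((n + 1 : ℝ) + 2 * s)))
            (ball 0 1) :=
          (aux_integrableOn_ball n (by push_cast; linarith) (by push_cast; linarith)).const_mul _
        refine hint.mono' hcore_meas.aestronglyMeasurable.restrict ?_
        refine (ae_restrict_iff' measurableSet_ball).2 (ae_of_all _ fun y _ => ?_)
        rw [Real.norm_eq_abs, abs_of_nonneg (hcore_nonneg y)]
        calc ‖y‖ ^ α * min ((L : ℝ) * ‖y‖) (2 * M) * ‖y‖ ^ (-((n + 1 : ℝ) + 2 * s))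
            ≤ ‖y‖ ^ α * ((L : ℝ) * ‖y‖) * ‖y‖ ^ (-((n + 1 : ℝ) + 2 * s)) := by
              have h2 : (0:ℝ) ≤ ‖y‖ ^ α := Real.rpow_nonneg (norm_nonneg _) _
              have h3 : (0:ℝ) ≤ ‖y‖ ^ (-((n + 1 : ℝ) + 2 * s)) :=
                Real.rpow_nonneg (norm_nonneg _) _
              exact mul_le_mul_of_nonneg_right
                (mul_le_mul_of_nonneg_left (min_le_left _ _) h2) h3
          _ = (L : ℝ) * ‖y‖ ^ (α + 1 - ((n + 1 : ℝ) + 2 * s)) := by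
              rcases eq_or_ne y 0 with rfl | hy0
              · have hne : α + 1 - ((n + 1 : ℝ) + 2 * s) ≠ 0 := by
                  have : α + 1 - ((n + 1 : ℝ) + 2 * s) < 0 := by
                    have : (0:ℝ) ≤ (n:ℝ) := Nat.cast_nonneg n
                    linarith
                  exact ne_of_lt this
                simp [Real.zero_rpow hα0.ne', Real.zero_rpow hne]
              · have hny : 0 < ‖y‖ := norm_pos_iff.2 hy0
                rw [show α + 1 - ((n + 1 : ℝ) + 2 * s)
                    = α + (1 + -((n + 1 : ℝ) + 2 * s)) by ring,
                  Real.rpow_add hny, Real.rpow_add hny, Real.rpow_one]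
                ring
      have h2 : IntegrableOn (fun y : EuclideanSpace ℝ (Fin (n + 1)) =>
          ‖y‖ ^ α * min ((L : ℝ) * ‖y‖) (2 * M) * ‖y‖ ^ (-((n + 1 : ℝ) + 2 * s)))
          (ball (0 : EuclideanSpace ℝ (Fin (n + 1))) 1)ᶜ := by
        set r : ℝ := (n + 1 : ℝ) + 2 * s - α with hr_def
        have hr0 : 0 < r := by push_cast [hr_def]; linarith
        have hint : IntegrableOn (fun y : EuclideanSpace ℝ (Fin (n + 1)) => 2 * M * 2 ^ r * (1 + ‖y‖) ^ (-r)) (ball (0 : EuclideanSpace ℝ (Fin (n + 1))) 1)ᶜ :=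
          ((integrable_one_add_norm (E := EuclideanSpace ℝ (Fin (n + 1)))
            (by rw [finrank_euclideanSpace_fin]; push_cast [hr_def]; linarith)).const_mul
              (2 * M * 2 ^ r)).integrableOn
        refine hint.mono' hcore_meas.aestronglyMeasurable.restrict ?_
        refine (ae_restrict_iff' measurableSet_ball.compl).2 (ae_of_all _ fun y hy => ?_)
        have hy1 : (1:ℝ) ≤ ‖y‖ := by
          simpa [mem_ball, dist_eq_norm] using hy
        have hny : (0:ℝ) < ‖y‖ := lt_of_lt_of_le one_pos hy1
        rw [Real.norm_eq_abs, abs_of_nonneg (hcore_nonneg y)]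
        calc ‖y‖ ^ α * min ((L : ℝ) * ‖y‖) (2 * M) * ‖y‖ ^ (-((n + 1 : ℝ) + 2 * s))
            ≤ ‖y‖ ^ α * (2 * M) * ‖y‖ ^ (-((n + 1 : ℝ) + 2 * s)) := by
              have h2 : (0:ℝ) ≤ ‖y‖ ^ α := Real.rpow_nonneg (norm_nonneg _) _
              have h3 : (0:ℝ) ≤ ‖y‖ ^ (-((n + 1 : ℝ) + 2 * s)) :=
                Real.rpow_nonneg (norm_nonneg _) _
              exact mul_le_mul_of_nonneg_right
                (mul_le_mul_of_nonneg_left (min_le_right _ _) h2) h3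
          _ = 2 * M * ‖y‖ ^ (-r) := by
              rw [show (-r : ℝ) = α + -((n + 1 : ℝ) + 2 * s) by rw [hr_def]; ring,
                Real.rpow_add hny]
              ring
          _ ≤ 2 * M * (2 ^ r * (1 + ‖y‖) ^ (-r)) := by
              refine mul_le_mul_of_nonneg_left ?_ (by positivity)
              have hle : (1 : ℝ) + ‖y‖ ≤ 2 * ‖y‖ := by linarith
              have h4 : (2 * ‖y‖ : ℝ) ^ (-r) ≤ (1 + ‖y‖) ^ (-r) :=
                Real.rpow_le_rpow_of_nonpos (by positivity) hle (neg_nonpos.2 hr0.le)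
              have h5 : (2 * ‖y‖ : ℝ) ^ (-r) = 2 ^ (-r) * ‖y‖ ^ (-r) :=
                Real.mul_rpow (by norm_num) (norm_nonneg _)
              calc ‖y‖ ^ (-r) = 2 ^ r * (2 ^ (-r) * ‖y‖ ^ (-r)) := by
                    rw [← mul_assoc, ← Real.rpow_add two_pos]
                    simp
              _ ≤ 2 ^ r * (1 + ‖y‖) ^ (-r) := by
                    rw [← h5]
                    exact mul_le_mul_of_nonneg_left h4 (by positivity)
          _ = 2 * M * 2 ^ r * (1 + ‖y‖) ^ (-r) := by ring
      have := h1.union h2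
      rwa [union_compl_self, integrableOn_univ] at this
    simpa [hbound_def, mul_assoc] using hcore.const_mul (2 * D)
  -- continuity of the numerator in `x`
  have hwc : Continuous w := by
    have hweq : w = fun x : EuclideanSpace ℝ (Fin (n + 1)) => max (x (Fin.last n)) 0 ^ α := funext hw
    rw [hweq]
    exact Continuous.rpow_const
      ((EuclideanSpace.proj (Fin.last n)).continuous.max continuous_const)
      (fun x => Or.inr hα0.le)
  -- the integrand
  set F : EuclideanSpace ℝ (Fin (n + 1)) → EuclideanSpace ℝ (Fin (n + 1)) → ℝ := fun x y =>
    ((w (x + y) - w x) * (φ (x + y) - φ x) + (w (x - y) - w x) * (φ (x - y) - φ x)) *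
      ‖y‖ ^ (-((n + 1 : ℝ) + 2 * s)) * a (‖y‖⁻¹ • y) with hF_def
  have hF_meas : ∀ x : EuclideanSpace ℝ (Fin (n + 1)), AEStronglyMeasurable (F x) volume := by
    intro x
    have h1 : Continuous fun y : EuclideanSpace ℝ (Fin (n + 1)) =>
        (w (x + y) - w x) * (φ (x + y) - φ x) + (w (x - y) - w x) * (φ (x - y) - φ x) := by
      have hφcont : Continuous φ := hφ.continuous
      fun_prop
    have h2 : Measurable fun y : EuclideanSpace ℝ (Fin (n + 1)) => ‖y‖ ^ (-((n + 1 : ℝ) + 2 * s)) := by fun_prop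
    have h3 : Measurable fun y : EuclideanSpace ℝ (Fin (n + 1)) => a (‖y‖⁻¹ • y) := by fun_prop
    exact ((h1.measurable.mul h2).mul h3).aestronglyMeasurable
  have h_bound : ∀ x : EuclideanSpace ℝ (Fin (n + 1)), ∀ y : EuclideanSpace ℝ (Fin (n + 1)), ‖F x y‖ ≤ bound y := by
    intro x y
    have hker : (0:ℝ) ≤ ‖y‖ ^ (-((n + 1 : ℝ) + 2 * s)) := Real.rpow_nonneg (norm_nonneg _) _
    have hminn : 0 ≤ min ((L : ℝ) * ‖y‖) (2 * M) := le_min (by positivity) (by positivity)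
    calc ‖F x y‖
        = |(w (x + y) - w x) * (φ (x + y) - φ x) + (w (x - y) - w x) * (φ (x - y) - φ x)| *
            (‖y‖ ^ (-((n + 1 : ℝ) + 2 * s))) * a (‖y‖⁻¹ • y) := by
          rw [hF_def, Real.norm_eq_abs, abs_mul, abs_mul, abs_of_nonneg hker,
            abs_of_nonneg (hanonneg _)]
      _ ≤ 2 * (‖y‖ ^ α * min ((L : ℝ) * ‖y‖) (2 * M)) * ‖y‖ ^ (-((n + 1 : ℝ) + 2 * s)) * D := by
          refine mul_le_mul (mul_le_mul_of_nonneg_right (hnum x y) hker) (habd _)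
            (hanonneg _) ?_
          positivity
      _ = bound y := by rw [hbound_def]; ring
  have h_lim : ∀ y : EuclideanSpace ℝ (Fin (n + 1)), Tendsto (fun k => F (xseq k) y) atTop (nhds (F x₀ y)) := by
    intro y
    have h1 : Continuous fun x : EuclideanSpace ℝ (Fin (n + 1)) =>
        (w (x + y) - w x) * (φ (x + y) - φ x) + (w (x - y) - w x) * (φ (x - y) - φ x) := by
      have hφcont : Continuous φ := hφ.continuous
      fun_prop
    have h2 := ((h1.tendsto x₀).comp hconv).mul_const
      (‖y‖ ^ (-((n + 1 : ℝ) + 2 * s))) |>.mul_const (a (‖y‖⁻¹ • y))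
    exact h2
  simp only [hl]
  exact tendsto_integral_of_dominated_convergence bound (fun k => hF_meas (xseq k)) hbound_int
    (fun k => ae_of_all _ fun y => h_bound (xseq k) y) (ae_of_all _ h_lim)
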